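/- arXiv:1105.6275 — 6 statements merged into one kernel-verified Lean document; each statement's English description precedes it below -/
import Mathlib

section
/- Let f ∈ Cvx(1) with f(t) ≥ f(-t) for t ≥ 0, and let f⁺ denote the inverse of f restricted to [0,1] and f⁻ the negative of the inverse of f restricted to [-1,0]. Then f is approximately α-regular if and only if lim_{t→0⁺} log H(f⁺(t), f⁻(t)) / log t = 1/α, where H(a,b) = 2/(1/a + 1/b) denotes the harmonic mean (with the convention 1/∞ = 0). -/
open Filter Set
open scoped ENNReal Topology

lemma ofReal_tendsto_top_iff {α : Type*} {l : Filter α} {u : α → ℝ} :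
    Tendsto (fun x => ENNReal.ofReal (u x)) l (𝓝 ⊤) ↔ Tendsto u l atTop := by
  rw [ENNReal.tendsto_nhds_top_iff_nnreal, tendsto_atTop]
  constructor
  · intro h b
    filter_upwards [h (Real.toNNReal (b + 1))] with x hx
    by_contra hc
    push_neg at hc
    have : ENNReal.ofReal (u x) ≤ ENNReal.ofReal ((Real.toNNReal (b+1) : ℝ)) := by
      apply ENNReal.ofReal_le_ofReal
      calc u x ≤ b := le_of_lt hc
      _ ≤ Real.toNNReal (b+1) := by
          rcases le_total 0 (b+1) with h0 | h0
          · rw [Real.coe_toNNReal _ h0]; linarith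
          · have : (0:ℝ) ≤ Real.toNNReal (b+1) := (Real.toNNReal (b+1)).2
            linarith
    rw [ENNReal.ofReal_coe_nnreal] at this
    exact absurd (lt_of_lt_of_le hx this) (lt_irrefl _)
  · intro h r
    filter_upwards [h ((r:ℝ) + 1)] with x hx
    have : ENNReal.ofReal ((r:ℝ)) < ENNReal.ofReal (u x) := by
      rw [ENNReal.ofReal_lt_ofReal_iff (by have := r.coe_nonneg; linarith)]
      linarith
    simpa [ENNReal.ofReal_coe_nnreal] using this

lemma tendsto_atTop_of_sub_tendsto {α : Type*} {l : Filter α} {u v : α → ℝ}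
    (hd : Tendsto (fun x => u x - v x) l (𝓝 0)) (h : Tendsto u l atTop) :
    Tendsto v l atTop := by
  have hev : ∀ᶠ x in l, (-1:ℝ) ≤ -(u x - v x) := by
    filter_upwards [hd.eventually (eventually_abs_sub_lt 0 one_pos)] with x hx
    simp only [sub_zero] at hx
    have := abs_lt.1 hx
    linarith
  have := tendsto_atTop_add_right_of_le' l (-1:ℝ) h hev
  refine this.congr (fun x => by ring)

lemma ofReal_tendsto_iff_of_ne_top {α : Type*} {l : Filter α} {u : α → ℝ} {c : ℝ≥0∞}
    (hc : c ≠ ⊤) (hu : ∀ᶠ x in l, 0 ≤ u x) :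
    Tendsto (fun x => ENNReal.ofReal (u x)) l (𝓝 c) ↔ Tendsto u l (𝓝 c.toReal) := by
  constructor
  · intro h
    have h2 := (ENNReal.tendsto_toReal hc).comp h
    have : (fun x => ENNReal.toReal (ENNReal.ofReal (u x))) =ᶠ[l] u := by
      filter_upwards [hu] with x hx; exact ENNReal.toReal_ofReal hx
    exact Tendsto.congr' this h2
  · intro h
    have := ENNReal.tendsto_ofReal h
    rwa [ENNReal.ofReal_toReal hc] at this

lemma ofReal_tendsto_congr {α : Type*} {l : Filter α} {u v : α → ℝ} {c : ℝ≥0∞}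
    (hd : Tendsto (fun x => u x - v x) l (𝓝 0))
    (hu : ∀ᶠ x in l, 0 ≤ u x) (hv : ∀ᶠ x in l, 0 ≤ v x) :
    Tendsto (fun x => ENNReal.ofReal (u x)) l (𝓝 c) ↔
      Tendsto (fun x => ENNReal.ofReal (v x)) l (𝓝 c) := by
  rcases eq_or_ne c ⊤ with rfl | hc
  · rw [ofReal_tendsto_top_iff, ofReal_tendsto_top_iff]
    have hd' : Tendsto (fun x => v x - u x) l (𝓝 0) := by
      have := hd.neg; simpa [neg_sub] using this
    exact ⟨tendsto_atTop_of_sub_tendsto hd, tendsto_atTop_of_sub_tendsto hd'⟩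
  · rw [ofReal_tendsto_iff_of_ne_top hc hu, ofReal_tendsto_iff_of_ne_top hc hv]
    constructor
    · intro h
      have := h.sub hd
      simpa using this
    · intro h
      have := h.add hd
      have h2 : (fun x => v x + (u x - v x)) = u := by funext x; ring
      rw [h2] at this
      simpa using this

lemma ofReal_inv_tendsto_iff {α : Type*} {l : Filter α} {u : α → ℝ} {c : ℝ≥0∞}
    (hu : ∀ᶠ x in l, 0 < u x) :
    Tendsto (fun x => ENNReal.ofReal (u x)⁻¹) l (𝓝 c⁻¹) ↔
      Tendsto (fun x => ENNReal.ofReal (u x)) l (𝓝 c) := by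
  have : (fun x => ENNReal.ofReal (u x)⁻¹) =ᶠ[l] fun x => (ENNReal.ofReal (u x))⁻¹ := by
    filter_upwards [hu] with x hx; exact ENNReal.ofReal_inv_of_pos hx
  rw [tendsto_congr' this]
  exact ENNReal.tendsto_inv_iff


/-- Approximate `α`-regularity (with `α ∈ [1,∞]`, encoded in `ℝ≥0∞`) is equivalent to
`lim_{t→0⁺} log H(f⁺ t, f⁻ t) / log t = 1/α`, where `H` is the harmonic mean. -/
theorem approx_regular_iff_harmonic_mean_of_inverses
    (f fp fm : ℝ → ℝ)
    (hconv : StrictConvexOn ℝ (Set.Icc (-1:ℝ) 1) f)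
    (hC1 : ContDiffOn ℝ 1 f (Set.Icc (-1:ℝ) 1))
    (hf0 : f 0 = 0) (hf'0 : deriv f 0 = 0)
    (hsym : ∀ t : ℝ, 0 ≤ t → t ≤ 1 → f (-t) ≤ f t)
    (hfp : ∀ t ∈ Set.Icc (0:ℝ) 1, fp (f t) = t)
    (hfm : ∀ t ∈ Set.Icc (-1:ℝ) 0, fm (f t) = -t)
    (α : ℝ≥0∞) (hα : 1 ≤ α) :
    Tendsto (fun t : ℝ => ENNReal.ofReal (Real.log ((f t + f (-t)) / 2) / Real.log |t|))
        (nhdsWithin 0 {(0:ℝ)}ᶜ) (nhds α) ↔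
      Tendsto (fun t : ℝ =>
          ENNReal.ofReal (Real.log (2 / (1 / fp t + 1 / fm t)) / Real.log t))
        (nhdsWithin 0 (Set.Ioi 0)) (nhds α⁻¹) := by
  have h0mem : (0:ℝ) ∈ Icc (-1:ℝ) 1 := by norm_num
  have hmem : Set.Icc (-1:ℝ) 1 ∈ 𝓝 (0:ℝ) := Icc_mem_nhds (by norm_num) (by norm_num)
  have hcont : ContinuousOn f (Icc (-1:ℝ) 1) := hC1.continuousOn
  have hdiff : DifferentiableAt ℝ f 0 :=
    (hC1.differentiableOn one_ne_zero).differentiableAt hmem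
  have hderiv : HasDerivAt f 0 0 := by simpa [hf'0] using hdiff.hasDerivAt
  have hslope : Tendsto (fun t => f t / t) (𝓝[≠](0:ℝ)) (𝓝 0) := by
    have := hasDerivAt_iff_tendsto_slope.1 hderiv
    exact this.congr fun t => by simp [slope_def_field, hf0]
  have hslopeR : Tendsto (fun t => f t / t) (𝓝[>](0:ℝ)) (𝓝 0) :=
    hslope.mono_left (nhdsWithin_mono 0 (fun u hu => ne_of_gt hu))
  have hslopeL : Tendsto (fun t => f t / t) (𝓝[<](0:ℝ)) (𝓝 0) :=
    hslope.mono_left (nhdsWithin_mono 0 (fun u hu => ne_of_lt hu))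
  have hcvx : ConvexOn ℝ (Icc (-1:ℝ) 1) f := hconv.convexOn
  have hub : ∀ x ∈ Icc (-1:ℝ) 1, ∀ c : ℝ, 0 ≤ c → c ≤ 1 → f (c * x) ≤ c * f x := by
    intro x hx c hc0 hc1
    have := hcvx.2 h0mem hx (by linarith : (0:ℝ) ≤ 1 - c) hc0 (by ring)
    simpa [hf0] using this
  have hnonneg : ∀ x ∈ Icc (-1:ℝ) 1, 0 ≤ f x := by
    intro x hx
    rcases lt_trichotomy x 0 with hneg | rfl | hposx
    · have hev : ∀ᶠ u in 𝓝[<](0:ℝ), f x / x ≤ f u / u := by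
        filter_upwards [Ioo_mem_nhdsLT_of_mem (⟨hneg, le_refl 0⟩ : (0:ℝ) ∈ Ioc x 0)]
          with u hu
        have hcx : u / x * x = u := div_mul_cancel₀ u hneg.ne
        have hc0 : 0 ≤ u / x := div_nonneg_of_nonpos hu.2.le hneg.le
        have hc1 : u / x ≤ 1 := by
          rw [div_le_one_of_neg hneg]  -- to test name
          exact hu.1.le
        have h1 := hub x hx (u/x) hc0 hc1
        rw [hcx] at h1
        rw [le_div_iff_of_neg hu.2]
        calc f u ≤ u / x * f x := h1
        _ = f x / x * u := by ring
      have h0 : f x / x ≤ 0 := ge_of_tendsto hslopeL hev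
      by_contra hcf
      push_neg at hcf
      have : 0 < f x / x := div_pos_of_neg_of_neg hcf hneg
      linarith
    · simp [hf0]
    · have hev : ∀ᶠ u in 𝓝[>](0:ℝ), f u / u ≤ f x / x := by
        filter_upwards [Ioo_mem_nhdsGT_of_mem (⟨le_refl 0, hposx⟩ : (0:ℝ) ∈ Ico 0 x)]
          with u hu
        have hcx : u / x * x = u := div_mul_cancel₀ u hposx.ne'
        have h1 := hub x hx (u/x) (div_nonneg hu.1.le hposx.le) ((div_le_one hposx).2 hu.2.le)
        rw [hcx] at h1
        rw [div_le_div_iff₀ hu.1 hposx]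
        calc f u * x ≤ u / x * f x * x := by nlinarith [hx.2, hu.1]
        _ = f x * u := by field_simp
      have h0 : 0 ≤ f x / x := le_of_tendsto hslopeR hev
      by_contra hcf
      push_neg at hcf
      have : f x / x < 0 := div_neg_of_neg_of_pos hcf hposx
      linarith
  -- strict positivity
  have hpos : ∀ x ∈ Icc (-1:ℝ) 1, x ≠ 0 → 0 < f x := by
    intro x hx hx0
    have hhalf : x/2 ∈ Icc (-1:ℝ) 1 := by
      constructor <;> [linarith [hx.1]; linarith [hx.2]]
    have hmid : f (x/2) < (1/2) * f 0 + (1/2) * f x := by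
      have h := hconv.2 h0mem hx hx0.symm (by norm_num : (0:ℝ) < 1/2)
        (by norm_num : (0:ℝ) < 1/2) (by norm_num)
      simp only [smul_eq_mul, mul_zero, zero_add] at h
      calc f (x/2) = f (1/2 * x) := by ring_nf
      _ < 1/2 * f 0 + 1/2 * f x := by rw [hf0]; simpa [hf0] using h
    have := hnonneg _ hhalf
    rw [hf0] at hmid
    linarith
  -- strict monotonicity on [0,1]
  have hmono : ∀ x y : ℝ, 0 ≤ x → x < y → y ≤ 1 → f x < f y := by
    intro x y hx0 hxy hy1
    have hymem : y ∈ Icc (-1:ℝ) 1 := ⟨by linarith, hy1⟩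
    have hy' : 0 < y := lt_of_le_of_lt hx0 hxy
    have hfy : 0 < f y := hpos y hymem hy'.ne'
    rcases eq_or_lt_of_le hx0 with rfl | hx0'
    · rwa [hf0]
    · have hcx : x / y * y = x := div_mul_cancel₀ x hy'.ne'
      have h1 := hub y hymem (x/y) (div_nonneg hx0 hy'.le) ((div_le_one hy').2 hxy.le)
      rw [hcx] at h1
      have : x / y * f y < f y := by
        have hlt : x / y < 1 := (div_lt_one hy').2 hxy
        nlinarith
      linarith
  -- strict antitonicity on [-1,0]
  have hanti : ∀ x y : ℝ, -1 ≤ x → x < y → y ≤ 0 → f y < f x := by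
    intro x y hx1 hxy hy0
    have hxmem : x ∈ Icc (-1:ℝ) 1 := ⟨hx1, by linarith⟩
    have hxneg0 : x < 0 := lt_of_lt_of_le hxy hy0
    have hfx : 0 < f x := hpos x hxmem hxneg0.ne
    rcases eq_or_lt_of_le hy0 with rfl | hy0'
    · rwa [hf0]
    · have hxneg : x < 0 := hxneg0
      have hcx : y / x * x = y := div_mul_cancel₀ y hxneg.ne
      have h1 := hub x hxmem (y/x) (div_nonneg_of_nonpos hy0 hxneg.le)
        (by rw [div_le_one_of_neg hxneg]; exact hxy.le)
      rw [hcx] at h1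
      have : y / x * f x < f x := by
        have hlt : y / x < 1 := by
          rw [div_lt_one_of_neg hxneg]
          exact hxy
        nlinarith
      linarith
  -- endpoints
  have hf1 : 0 < f 1 := hpos 1 (by norm_num) one_ne_zero
  have hfm1 : 0 < f (-1) := hpos (-1) (by norm_num) (by norm_num)
  have hs0 : 0 < min (f 1) (f (-1)) := lt_min hf1 hfm1
  -- inverse function facts
  have hinv : ∀ s : ℝ, 0 < s → s ≤ min (f 1) (f (-1)) →
      (0 < fp s ∧ fp s ≤ 1 ∧ f (fp s) = s) ∧ (0 < fm s ∧ fm s ≤ 1 ∧ f (-(fm s)) = s)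
      ∧ fp s ≤ fm s := by
    intro s hsp hss
    obtain ⟨t, ht, hft⟩ := intermediate_value_Icc (by norm_num : (0:ℝ) ≤ 1)
      (hcont.mono (fun x hx => ⟨by linarith [hx.1], hx.2⟩))
      (⟨by rw [hf0]; exact hsp.le, le_trans hss (min_le_left _ _)⟩ : s ∈ Icc (f 0) (f 1))
    obtain ⟨t', ht', hft'⟩ := intermediate_value_Icc' (by norm_num : (-1:ℝ) ≤ 0)
      (hcont.mono (fun x hx => ⟨hx.1, by linarith [hx.2]⟩))
      (⟨by rw [hf0]; exact hsp.le, le_trans hss (min_le_right _ _)⟩ : s ∈ Icc (f 0) (f (-1)))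
    have htpos : 0 < t := by
      rcases eq_or_lt_of_le ht.1 with rfl | h
      · rw [hf0] at hft; exact absurd hft.symm hsp.ne'
      · exact h
    have ht'neg : t' < 0 := by
      rcases eq_or_lt_of_le ht'.2 with rfl | h
      · rw [hf0] at hft'; exact absurd hft'.symm hsp.ne'
      · exact h
    have hfps : fp s = t := by rw [← hft, hfp t ht]
    have hfms : fm s = -t' := by rw [← hft', hfm t' ht']
    refine ⟨⟨by rw [hfps]; exact htpos, by rw [hfps]; exact ht.2, by rw [hfps, hft]⟩,
      ⟨by rw [hfms]; linarith, by rw [hfms]; linarith [ht'.1], by rw [hfms, neg_neg, hft']⟩, ?_⟩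
    rw [hfps, hfms]
    by_contra hc
    push_neg at hc
    have h1 : f t' < f (-t) := hanti (-t) t' (by linarith [ht.2]) (by linarith) ht'.2
    have h2 : f (-t) ≤ f t := hsym t htpos.le ht.2
    rw [hft, ← hft'] at h2
    linarith
  -- tendsto of fp to 0+
  have hfpt : Tendsto fp (𝓝[>](0:ℝ)) (𝓝[>](0:ℝ)) := by
    rw [tendsto_nhdsWithin_iff]
    constructor
    · rw [tendsto_order]
      constructor
      · intro a ha
        filter_upwards [Ioc_mem_nhdsGT_of_mem (⟨le_refl 0, hs0⟩ : (0:ℝ) ∈ Ico 0 (min (f 1) (f (-1))))] with s hs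
        exact lt_trans ha ((hinv s hs.1 hs.2).1.1)
      · intro ε hε
        have hε' : 0 < min ε 1 := lt_min hε one_pos
        have hfε' : 0 < f (min ε 1) :=
          hpos _ ⟨by linarith [min_le_right ε 1], min_le_right ε 1⟩ hε'.ne'
        filter_upwards [Ioo_mem_nhdsGT_of_mem
          (⟨le_refl 0, lt_min hs0 hfε'⟩ : (0:ℝ) ∈ Ico 0 (min (min (f 1) (f (-1))) (f (min ε 1))))] with s hs
        obtain ⟨⟨hp1, hp2, hp3⟩, -, -⟩ :=
          hinv s hs.1 (le_of_lt (lt_of_lt_of_le hs.2 (min_le_left _ _)))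
        by_contra hcon
        push_neg at hcon
        have hle : min ε 1 ≤ fp s := le_trans (min_le_left ε 1) hcon
        have : f (min ε 1) ≤ f (fp s) := by
          rcases eq_or_lt_of_le hle with heq | hlt
          · rw [heq]
          · exact (hmono _ _ hε'.le hlt hp2).le
        rw [hp3] at this
        have := lt_of_lt_of_le hs.2 (min_le_right _ _)
        linarith
    · filter_upwards [Ioc_mem_nhdsGT_of_mem (⟨le_refl 0, hs0⟩ : (0:ℝ) ∈ Ico 0 (min (f 1) (f (-1))))] with s hs
      exact (hinv s hs.1 hs.2).1.1
  -- tendsto of f to 0+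
  have hcont0 : ContinuousAt f 0 := hcont.continuousAt hmem
  have hft : Tendsto f (𝓝[>](0:ℝ)) (𝓝[>](0:ℝ)) := by
    rw [tendsto_nhdsWithin_iff]
    constructor
    · have := hcont0.tendsto
      rw [hf0] at this
      exact this.mono_left nhdsWithin_le_nhds
    · filter_upwards [Ioc_mem_nhdsGT_of_mem (⟨le_refl 0, one_pos⟩ : (0:ℝ) ∈ Ico 0 1)] with t htt
      exact hpos t ⟨by linarith [htt.1], htt.2⟩ (ne_of_gt htt.1)
  -- basic eventual facts on the right of 0
  have hev : ∀ᶠ t in 𝓝[>](0:ℝ), 0 < t ∧ t < 1 ∧ 0 < f t ∧ f t < t := by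
    have h1 : ∀ᶠ t in 𝓝[>](0:ℝ), f t / t < 1 := hslopeR.eventually_lt_const one_pos
    filter_upwards [Ioo_mem_nhdsGT_of_mem (⟨le_refl 0, one_pos⟩ : (0:ℝ) ∈ Ico 0 1), h1] with t ht h1t
    refine ⟨ht.1, ht.2, hpos t ⟨by linarith [ht.1], ht.2.le⟩ (ne_of_gt ht.1), ?_⟩
    have := (div_lt_one ht.1).1 h1t
    linarith
  have hlogt : Tendsto (fun t : ℝ => |Real.log t|) (𝓝[>](0:ℝ)) atTop :=
    tendsto_abs_atBot_atTop.comp Real.tendsto_log_nhdsGT_zero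
  have hlog2 : Tendsto (fun t : ℝ => Real.log 2 / |Real.log t|) (𝓝[>](0:ℝ)) (𝓝 0) :=
    tendsto_const_nhds.div_atTop hlogt
  have hlog2pos : (0:ℝ) ≤ Real.log 2 := Real.log_nonneg one_le_two
  -- step 1 : two-sided limit reduces to right limit, by symmetry of the function
  have hsplit : Tendsto (fun t : ℝ => ENNReal.ofReal (Real.log ((f t + f (-t)) / 2) / Real.log |t|))
        (𝓝[≠](0:ℝ)) (𝓝 α) ↔
      Tendsto (fun t : ℝ => ENNReal.ofReal (Real.log ((f t + f (-t)) / 2) / Real.log |t|))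
        (𝓝[>](0:ℝ)) (𝓝 α) := by
    constructor
    · intro h
      exact h.mono_left (nhdsWithin_mono _ fun u hu => ne_of_gt hu)
    · intro h
      have hnegL : Tendsto (fun t : ℝ => -t) (𝓝[<](0:ℝ)) (𝓝[>](0:ℝ)) := by
        rw [tendsto_nhdsWithin_iff]
        constructor
        · have h2 : Tendsto (fun t : ℝ => -t) (𝓝 (0:ℝ)) (𝓝 (-0:ℝ)) := continuous_neg.tendsto 0
          rw [neg_zero] at h2
          exact h2.mono_left nhdsWithin_le_nhds
        · filter_upwards [self_mem_nhdsWithin] with t htl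
          exact neg_pos.2 (mem_Iio.1 htl)
      rw [← nhdsLT_sup_nhdsGT (0:ℝ), tendsto_sup]
      refine ⟨(h.comp hnegL).congr fun t => ?_, h⟩
      show ENNReal.ofReal (Real.log ((f (-t) + f (-(-t))) / 2) / Real.log |(-t)|) = _
      rw [neg_neg, abs_neg, add_comm (f (-t))]
  -- step 2 : squeeze the symmetrized function against f itself
  have hT12 : Tendsto (fun t : ℝ => ENNReal.ofReal (Real.log ((f t + f (-t)) / 2) / Real.log |t|))
        (𝓝[>](0:ℝ)) (𝓝 α) ↔
      Tendsto (fun t : ℝ => ENNReal.ofReal (Real.log (f t) / Real.log t)) (𝓝[>](0:ℝ)) (𝓝 α) := by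
    have hg : ∀ᶠ t in 𝓝[>](0:ℝ), f t / 2 ≤ (f t + f (-t)) / 2 ∧ (f t + f (-t)) / 2 ≤ f t
        ∧ 0 < (f t + f (-t)) / 2 := by
      filter_upwards [hev] with t ⟨ht0, ht1, hft0, hftt⟩
      have hsm : f (-t) ≤ f t := hsym t ht0.le ht1.le
      have hnn : 0 ≤ f (-t) := hnonneg (-t) ⟨by linarith, by linarith⟩
      exact ⟨by linarith, by linarith, by linarith⟩
    apply ofReal_tendsto_congr
    · apply squeeze_zero_norm' _ hlog2
      filter_upwards [hev, hg] with t ⟨ht0, ht1, hft0, hftt⟩ ⟨hg1, hg2, hg0⟩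
      have hltn : Real.log t < 0 := Real.log_neg ht0 ht1
      have hlogg_le : Real.log ((f t + f (-t)) / 2) ≤ Real.log (f t) :=
        Real.log_le_log hg0 hg2
      have hlogg_ge : Real.log (f t) - Real.log 2 ≤ Real.log ((f t + f (-t)) / 2) := by
        rw [← Real.log_div hft0.ne' two_ne_zero]
        exact Real.log_le_log (by positivity) hg1
      rw [Real.norm_eq_abs, abs_of_pos ht0, div_sub_div_same, abs_div]
      rw [div_le_div_iff₀ (abs_pos.2 hltn.ne) (abs_pos.2 hltn.ne)]
      have : |Real.log ((f t + f (-t)) / 2) - Real.log (f t)| ≤ Real.log 2 :=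
        abs_le.2 ⟨by linarith, by linarith⟩
      nlinarith [abs_nonneg (Real.log ((f t + f (-t)) / 2) - Real.log (f t)), abs_pos.2 hltn.ne]
    · filter_upwards [hev, hg] with t ⟨ht0, ht1, hft0, hftt⟩ ⟨hg1, hg2, hg0⟩
      rw [abs_of_pos ht0]
      have h1 : Real.log ((f t + f (-t)) / 2) ≤ 0 :=
        Real.log_nonpos hg0.le (by linarith)
      exact div_nonneg_of_nonpos h1 (Real.log_nonpos ht0.le ht1.le)
    · filter_upwards [hev] with t ⟨ht0, ht1, hft0, hftt⟩
      exact div_nonneg_of_nonpos (Real.log_nonpos hft0.le (by linarith))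
        (Real.log_nonpos ht0.le ht1.le)
  -- step 3 : invert the ratio
  have hT23 : Tendsto (fun t : ℝ => ENNReal.ofReal (Real.log (f t) / Real.log t)) (𝓝[>](0:ℝ)) (𝓝 α) ↔
      Tendsto (fun t : ℝ => ENNReal.ofReal (Real.log t / Real.log (f t))) (𝓝[>](0:ℝ)) (𝓝 α⁻¹) := by
    rw [← ENNReal.tendsto_inv_iff]
    apply tendsto_congr'
    filter_upwards [hev] with t ⟨ht0, ht1, hft0, hftt⟩
    have hrpos : 0 < Real.log (f t) / Real.log t :=
      div_pos_of_neg_of_neg (Real.log_neg hft0 (by linarith)) (Real.log_neg ht0 ht1)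
    rw [← ENNReal.ofReal_inv_of_pos hrpos, inv_div]
  -- step 4 : change variables via the inverses
  have hT34 : Tendsto (fun t : ℝ => ENNReal.ofReal (Real.log t / Real.log (f t))) (𝓝[>](0:ℝ)) (𝓝 α⁻¹) ↔
      Tendsto (fun s : ℝ => ENNReal.ofReal (Real.log (fp s) / Real.log s)) (𝓝[>](0:ℝ)) (𝓝 α⁻¹) := by
    constructor
    · intro h
      apply (h.comp hfpt).congr'
      filter_upwards [Ioc_mem_nhdsGT_of_mem (⟨le_refl 0, hs0⟩ : (0:ℝ) ∈ Ico 0 (min (f 1) (f (-1))))] with s hs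
      obtain ⟨⟨h1, h2, h3⟩, -, -⟩ := hinv s hs.1 hs.2
      show ENNReal.ofReal (Real.log (fp s) / Real.log (f (fp s))) = _
      rw [h3]
    · intro h
      apply (h.comp hft).congr'
      filter_upwards [hev] with t ⟨ht0, ht1, hft0, hftt⟩
      show ENNReal.ofReal (Real.log (fp (f t)) / Real.log (f t)) = _
      rw [hfp t ⟨ht0.le, ht1.le⟩]
  -- step 5 : squeeze the harmonic mean against fp
  have hT45 : Tendsto (fun s : ℝ => ENNReal.ofReal (Real.log (fp s) / Real.log s)) (𝓝[>](0:ℝ)) (𝓝 α⁻¹) ↔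
      Tendsto (fun s : ℝ => ENNReal.ofReal (Real.log (2 / (1 / fp s + 1 / fm s)) / Real.log s))
        (𝓝[>](0:ℝ)) (𝓝 α⁻¹) := by
    have hfp0 : Tendsto fp (𝓝[>](0:ℝ)) (𝓝 0) := (tendsto_nhdsWithin_iff.1 hfpt).1
    have hsmall : ∀ᶠ s in 𝓝[>](0:ℝ), fp s < 1/2 := hfp0.eventually_lt_const (by norm_num)
    have hH : ∀ᶠ s in 𝓝[>](0:ℝ), 0 < fp s ∧ fp s ≤ 2 / (1 / fp s + 1 / fm s)
        ∧ 2 / (1 / fp s + 1 / fm s) ≤ 2 * fp s ∧ fp s < 1/2 ∧ 0 < s ∧ s < 1 := by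
      filter_upwards [Ioo_mem_nhdsGT_of_mem
        (⟨le_refl 0, lt_min hs0 one_pos⟩ : (0:ℝ) ∈ Ico 0 (min (min (f 1) (f (-1))) 1)), hsmall] with s hs hsm
      have hs1 : s < 1 := lt_of_lt_of_le hs.2 (min_le_right _ _)
      obtain ⟨⟨ha0, ha1, hfa⟩, ⟨hb0, hb1, hfb⟩, hab⟩ :=
        hinv s hs.1 (le_of_lt (lt_of_lt_of_le hs.2 (min_le_left _ _)))
      have hia : 0 < 1 / fp s := by positivity
      have hib : 0 < 1 / fm s := by positivity
      have hba : 1 / fm s ≤ 1 / fp s := one_div_le_one_div_of_le ha0 hab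
      constructor
      · exact ha0
      refine ⟨?_, ?_, hsm, hs.1, hs1⟩
      · rw [le_div_iff₀ (by linarith)]
        have : fp s * (1 / fp s) = 1 := by field_simp
        nlinarith
      · rw [div_le_iff₀ (by linarith)]
        have : fp s * (1 / fp s) = 1 := by field_simp
        nlinarith
    apply ofReal_tendsto_congr
    · apply squeeze_zero_norm' _ hlog2
      filter_upwards [hH] with s ⟨ha0, hH1, hH2, ha2, hs0', hs1⟩
      have hH0 : 0 < 2 / (1 / fp s + 1 / fm s) := lt_of_lt_of_le ha0 hH1
      have hltn : Real.log s < 0 := Real.log_neg hs0' hs1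
      have hl1 : Real.log (fp s) ≤ Real.log (2 / (1 / fp s + 1 / fm s)) :=
        Real.log_le_log ha0 hH1
      have hl2 : Real.log (2 / (1 / fp s + 1 / fm s)) ≤ Real.log 2 + Real.log (fp s) := by
        calc Real.log (2 / (1 / fp s + 1 / fm s)) ≤ Real.log (2 * fp s) :=
              Real.log_le_log hH0 hH2
        _ = Real.log 2 + Real.log (fp s) := Real.log_mul two_ne_zero ha0.ne'
      rw [Real.norm_eq_abs, div_sub_div_same, abs_div]
      rw [div_le_div_iff₀ (abs_pos.2 hltn.ne) (abs_pos.2 hltn.ne)]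
      have : |Real.log (fp s) - Real.log (2 / (1 / fp s + 1 / fm s))| ≤ Real.log 2 :=
        abs_le.2 ⟨by linarith, by linarith⟩
      nlinarith [abs_nonneg (Real.log (fp s) - Real.log (2 / (1 / fp s + 1 / fm s))),
        abs_pos.2 hltn.ne]
    · filter_upwards [hH] with s ⟨ha0, hH1, hH2, ha2, hs0', hs1⟩
      exact div_nonneg_of_nonpos (Real.log_nonpos ha0.le (by linarith))
        (Real.log_nonpos hs0'.le hs1.le)
    · filter_upwards [hH] with s ⟨ha0, hH1, hH2, ha2, hs0', hs1⟩
      have hH0 : 0 < 2 / (1 / fp s + 1 / fm s) := lt_of_lt_of_le ha0 hH1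
      exact div_nonneg_of_nonpos (Real.log_nonpos hH0.le (by linarith))
        (Real.log_nonpos hs0'.le hs1.le)
  exact hsplit.trans (hT12.trans (hT23.trans (hT34.trans hT45)))
end

section
/- Let f : [0,1] → [0,∞) be strictly increasing, continuous, convex with f(0)=0, and for a fixed a > 0 let f⁺ be the inverse of f and f⁺ₐ(s) be defined implicitly by f(f⁺ₐ(s)) = s - s·f⁺ₐ(s) for small s > 0. Then lim_{s→0⁺} f⁺ₐ(s)/f⁺(s) = 1; in particular f⁺ₐ(s) ≍ f⁺(s) for small s > 0. -/
open Filter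

/-- The modified inverse `f⁺ₐ`, defined by `f (f⁺ₐ s) = s - s * f⁺ₐ s`, is
asymptotically equivalent to the inverse `f⁺` as `s → 0⁺`. -/
theorem modified_inverse_equivalent (f fp fpa : ℝ → ℝ) (ε : ℝ) (hε : 0 < ε)
    (hmono : StrictMonoOn f (Set.Icc (0:ℝ) 1))
    (hcont : ContinuousOn f (Set.Icc (0:ℝ) 1))
    (hconv : ConvexOn ℝ (Set.Icc (0:ℝ) 1) f)
    (hf0 : f 0 = 0)
    (hnonneg : ∀ x ∈ Set.Icc (0:ℝ) 1, 0 ≤ f x)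
    (hfp : ∀ x ∈ Set.Icc (0:ℝ) 1, fp (f x) = x)
    (hfpa : ∀ s ∈ Set.Ioo (0:ℝ) ε, 0 < fpa s ∧ fpa s ≤ 1 ∧ f (fpa s) = s - s * fpa s) :
    Tendsto (fun s => fpa s / fp s) (nhdsWithin 0 (Set.Ioi 0)) (nhds 1) := by
  have h0m : (0:ℝ) ∈ Set.Icc (0:ℝ) 1 := by norm_num
  have h1m : (1:ℝ) ∈ Set.Icc (0:ℝ) 1 := by norm_num
  have hf1 : 0 < f 1 := by
    have := hmono h0m h1m zero_lt_one
    linarith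
  -- basic facts about fp on (0, f 1)
  have hfpfact : ∀ s ∈ Set.Ioo (0:ℝ) (f 1), f (fp s) = s ∧ 0 < fp s ∧ fp s ≤ 1 := by
    intro s hs
    have hsm : s ∈ Set.Icc (f 0) (f 1) := by rw [hf0]; exact ⟨hs.1.le, hs.2.le⟩
    obtain ⟨x, hx, hfx⟩ := intermediate_value_Icc (zero_le_one) hcont hsm
    have hfpx : fp s = x := by rw [← hfx]; exact hfp x hx
    have hxpos : 0 < x := by
      rcases lt_or_eq_of_le hx.1 with h | h
      · exact h
      · exfalso
        rw [← h, hf0] at hfx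
        linarith [hs.1]
    refine ⟨by rw [hfpx, hfx], by rw [hfpx]; exact hxpos, by rw [hfpx]; exact hx.2⟩
  have hδ : 0 < min ε (f 1) := lt_min hε hf1
  -- fpa tends to 0
  have hfpa0 : Tendsto fpa (nhdsWithin 0 (Set.Ioi 0)) (nhds 0) := by
    refine tendsto_order.2 ⟨fun a ha => ?_, fun b hb => ?_⟩
    · filter_upwards [Ioo_mem_nhdsGT hε] with s hs
      exact lt_trans ha (hfpa s hs).1
    · have hηm : min b 1 ∈ Set.Icc (0:ℝ) 1 :=
        ⟨le_min hb.le zero_le_one, min_le_right _ _⟩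
      have hηpos : 0 < min b 1 := lt_min hb zero_lt_one
      have hfη : 0 < f (min b 1) := by
        have := hmono h0m hηm hηpos
        linarith
      filter_upwards [Ioo_mem_nhdsGT (lt_min hε hfη)] with s hs
      obtain ⟨hs0, hsu⟩ := hs
      obtain ⟨hpa0, hpa1, hpaeq⟩ := hfpa s ⟨hs0, lt_of_lt_of_le hsu (min_le_left _ _)⟩
      have hflt : f (fpa s) < f (min b 1) := by
        have : s * fpa s > 0 := mul_pos hs0 hpa0
        have : f (fpa s) < s := by rw [hpaeq]; linarith
        exact lt_of_lt_of_le this (le_of_lt (lt_of_lt_of_le hsu (min_le_right _ _)))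
      have : fpa s < min b 1 :=
        (hmono.lt_iff_lt ⟨hpa0.le, hpa1⟩ hηm).1 hflt
      exact lt_of_lt_of_le this (min_le_left _ _)
  -- squeeze
  have hev : ∀ᶠ s in nhdsWithin (0:ℝ) (Set.Ioi 0),
      1 - fpa s ≤ fpa s / fp s ∧ fpa s / fp s ≤ 1 := by
    filter_upwards [Ioo_mem_nhdsGT hδ] with s hs
    obtain ⟨hs0, hsu⟩ := hs
    obtain ⟨hpa0, hpa1, hpaeq⟩ := hfpa s ⟨hs0, lt_of_lt_of_le hsu (min_le_left _ _)⟩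
    obtain ⟨hfps, hfppos, hfp1⟩ := hfpfact s ⟨hs0, lt_of_lt_of_le hsu (min_le_right _ _)⟩
    have hpam : fpa s ∈ Set.Icc (0:ℝ) 1 := ⟨hpa0.le, hpa1⟩
    have hfpm : fp s ∈ Set.Icc (0:ℝ) 1 := ⟨hfppos.le, hfp1⟩
    -- fpa s ≤ fp s
    have hle : fpa s ≤ fp s := by
      have : f (fpa s) ≤ f (fp s) := by
        rw [hpaeq, hfps]
        nlinarith
      exact (hmono.le_iff_le hpam hfpm).1 this
    -- (1 - fpa s) * fp s ≤ fpa s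
    have hfpa_lt1 : fpa s < 1 := by
      by_contra h
      push_neg at h
      have h1 : fpa s = 1 := le_antisymm hpa1 h
      rw [h1] at hpaeq
      simp at hpaeq
      linarith
    have htm : (1 - fpa s) * fp s ∈ Set.Icc (0:ℝ) 1 := by
      constructor
      · exact mul_nonneg (by linarith) hfppos.le
      · calc (1 - fpa s) * fp s ≤ 1 * 1 := by
              apply mul_le_mul (by linarith) hfp1 hfppos.le zero_le_one
        _ = 1 := by ring
    have hconvx : f ((1 - fpa s) * fp s) ≤ (1 - fpa s) * f (fp s) := by
      have := hconv.2 hfpm h0m (by linarith : (0:ℝ) ≤ 1 - fpa s)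
        hpa0.le (by ring)
      simpa [hf0] using this
    have hlow : (1 - fpa s) * fp s ≤ fpa s := by
      have h2 : f ((1 - fpa s) * fp s) ≤ f (fpa s) := by
        rw [hpaeq, hfps] at *
        calc f ((1 - fpa s) * fp s) ≤ (1 - fpa s) * s := hconvx
          _ = s - s * fpa s := by ring
      exact (hmono.le_iff_le htm hpam).1 h2
    constructor
    · rw [le_div_iff₀ hfppos]; exact hlow
    · rw [div_le_one hfppos]; exact hle
  have hlower : Tendsto (fun s => 1 - fpa s) (nhdsWithin 0 (Set.Ioi 0)) (nhds 1) := by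
    have h := Tendsto.sub (tendsto_const_nhds (x := (1:ℝ))) hfpa0
    simpa using h
  refine tendsto_of_tendsto_of_tendsto_of_le_of_le' hlower tendsto_const_nhds
    (hev.mono fun s h => h.1) (hev.mono fun s h => h.2)
end

section
/- Let f : [0,∞) → ℝ be a C¹ strictly convex function with f(0) = f'(0) = 0, and suppose lim_{x→0⁺} log f(x)/log x = α for some 1 < α < ∞. Then lim_{x→0⁺} log f'(x)/log x = α - 1. -/
open Filter

/-- If `f` is `C¹`, strictly convex on `[0,∞)` with `f 0 = f' 0 = 0` and
`log f(x) / log x → α` as `x → 0⁺`, then `log f'(x) / log x → α - 1`. -/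
theorem deriv_log_limit (f : ℝ → ℝ) (α : ℝ) (hα1 : 1 < α)
    (hC1 : ContDiffOn ℝ 1 f (Set.Ici (0:ℝ)))
    (hconv : StrictConvexOn ℝ (Set.Ici (0:ℝ)) f)
    (hf0 : f 0 = 0) (hf'0 : deriv f 0 = 0)
    (hreg : Tendsto (fun x => Real.log (f x) / Real.log x)
      (nhdsWithin 0 (Set.Ioi 0)) (nhds α)) :
    Tendsto (fun x => Real.log (deriv f x) / Real.log x)
      (nhdsWithin 0 (Set.Ioi 0)) (nhds (α - 1)) := by
  have hinvlog : Tendsto (fun x : ℝ => (Real.log x)⁻¹) (nhdsWithin 0 (Set.Ioi 0)) (nhds 0) := by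
    have h : Tendsto (fun x : ℝ => -Real.log x) (nhdsWithin 0 (Set.Ioi 0)) atTop :=
      tendsto_neg_atTop_iff.mpr Real.tendsto_log_nhdsGT_zero
    have h3 := h.inv_tendsto_atTop.neg
    simp only [Pi.inv_apply, inv_neg, neg_neg, neg_zero] at h3
    exact h3
  have hmap2 : Tendsto (fun x : ℝ => 2*x) (nhdsWithin 0 (Set.Ioi 0)) (nhdsWithin 0 (Set.Ioi 0)) := by
    apply tendsto_nhdsWithin_of_tendsto_nhds_of_eventually_within
    · have : Tendsto (fun x : ℝ => 2*x) (nhds 0) (nhds 0) := by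
        simpa using (tendsto_id (α := ℝ) (x := nhds 0)).const_mul 2
      exact this.mono_left nhdsWithin_le_nhds
    · filter_upwards [self_mem_nhdsWithin] with x hx
      exact Set.mem_Ioi.2 (mul_pos two_pos (Set.mem_Ioi.1 hx))
  -- positivity of f on (0,∞)
  have hpos : ∀ x : ℝ, 0 < x → 0 < f x := by
    by_contra h
    push_neg at h
    obtain ⟨b, hb, hfb⟩ := h
    have hfb2 : f (b/2) < 0 := by
      have h2 := hconv.2 (Set.self_mem_Ici) (Set.mem_Ici.2 hb.le) hb.ne
        (by norm_num : (0:ℝ) < 1/2) (by norm_num : (0:ℝ) < 1/2) (by norm_num)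
      simp only [smul_eq_mul, mul_zero, zero_add, hf0] at h2
      calc f (b/2) = f (1/2 * b) := by ring_nf
        _ < 1/2 * 0 + 1/2 * f b := by simpa [hf0] using h2
        _ ≤ 0 := by linarith
    set c : ℝ := -(f (b/2)) / (b/2) with hc
    have hb2 : (0:ℝ) < b/2 := by linarith
    have hcpos : 0 < c := div_pos (neg_pos.2 hfb2) hb2
    have key : ∀ x : ℝ, 0 < x → x ≤ b/2 → f x ≤ -c * x := by
      intro x hx hxb
      have hm := hconv.convexOn.slope_mono (Set.self_mem_Ici)
        (Set.mem_diff_singleton.2 ⟨Set.mem_Ici.2 hx.le, hx.ne'⟩)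
        (Set.mem_diff_singleton.2 ⟨Set.mem_Ici.2 hb2.le, hb2.ne'⟩) hxb
      rw [slope_def_field, slope_def_field, hf0] at hm
      have hm' : f x / x ≤ f (b/2) / (b/2) := by
        simpa using hm
      have : f (b/2) / (b/2) = -c := by rw [hc, neg_div, neg_neg]
      rw [this] at hm'
      calc f x = (f x / x) * x := by field_simp
        _ ≤ -c * x := mul_le_mul_of_nonneg_right hm' hx.le
    have hbnd : ∀ᶠ x in nhdsWithin (0:ℝ) (Set.Ioi 0),
        Real.log (f x) / Real.log x ≤ Real.log c / Real.log x + 1 := by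
      filter_upwards [Ioo_mem_nhdsGT_of_mem ⟨le_refl (0:ℝ), lt_min hb2 one_pos⟩] with x hx
      obtain ⟨hx0, hx1⟩ := hx
      have hxlt1 : x < 1 := lt_of_lt_of_le hx1 (min_le_right _ _)
      have hxb : x ≤ b/2 := (lt_of_lt_of_le hx1 (min_le_left _ _)).le
      have hlx : Real.log x < 0 := Real.log_neg hx0 hxlt1
      have hfx := key x hx0 hxb
      have hfxneg : f x < 0 := lt_of_le_of_lt hfx (by nlinarith)
      have hlog1 : Real.log (c*x) ≤ Real.log (-(f x)) :=
        Real.log_le_log (by positivity) (by linarith)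
      rw [Real.log_neg_eq_log] at hlog1
      rw [Real.log_mul hcpos.ne' hx0.ne'] at hlog1
      have hdiv := div_le_div_of_nonpos_of_le hlx.le hlog1
      calc Real.log (f x) / Real.log x ≤ (Real.log c + Real.log x) / Real.log x := hdiv
        _ = Real.log c / Real.log x + 1 := by rw [add_div, div_self hlx.ne]
    have hlim : Tendsto (fun x : ℝ => Real.log c / Real.log x + 1)
        (nhdsWithin 0 (Set.Ioi 0)) (nhds 1) := by
      have := (hinvlog.const_mul (Real.log c)).add_const 1
      simpa [div_eq_mul_inv] using this
    have : α ≤ 1 := le_of_tendsto_of_tendsto hreg hlim hbnd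
    linarith
  have hdiff : ∀ x : ℝ, 0 < x → DifferentiableAt ℝ f x := by
    intro x hx
    have hmem : Set.Ici (0:ℝ) ∈ nhds x :=
      mem_of_superset (Ioi_mem_nhds hx) Set.Ioi_subset_Ici_self
    exact (hC1.differentiableOn one_ne_zero).differentiableAt hmem
  have hE : Set.Ioo (0:ℝ) (1/2) ∈ nhdsWithin (0:ℝ) (Set.Ioi 0) :=
    Ioo_mem_nhdsGT_of_mem ⟨le_refl (0:ℝ), by norm_num⟩
  have chain : ∀ᶠ x in nhdsWithin (0:ℝ) (Set.Ioi 0),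
      Real.log (f (2*x)) / Real.log x - 1 ≤ Real.log (deriv f x) / Real.log x ∧
      Real.log (deriv f x) / Real.log x ≤ Real.log (f x) / Real.log x - 1 := by
    filter_upwards [hE] with x hx
    obtain ⟨hx0, hx2⟩ := hx
    have hd := hdiff x hx0
    have hfx := hpos x hx0
    have hf2x := hpos (2*x) (by linarith)
    have hlx : Real.log x < 0 := Real.log_neg hx0 (by linarith)
    have hlow : f x / x < deriv f x := by
      have h1 := hconv.slope_lt_deriv Set.self_mem_Ici (Set.mem_Ici.2 hx0.le) hx0 hd
      rw [slope_def_field, hf0, sub_zero, sub_zero] at h1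
      exact h1
    have hdx : 0 < deriv f x := lt_trans (div_pos hfx hx0) hlow
    have hhigh : deriv f x < (f (2*x) - f x)/x := by
      have h1 := hconv.deriv_lt_slope (Set.mem_Ici.2 hx0.le)
        (Set.mem_Ici.2 (by linarith : (0:ℝ) ≤ 2*x)) (by linarith) hd
      rw [slope_def_field] at h1
      have h2 : 2*x - x = x := by ring
      rwa [h2] at h1
    have hA : Real.log (f x) ≤ Real.log x + Real.log (deriv f x) := by
      rw [← Real.log_mul hx0.ne' hdx.ne']
      apply Real.log_le_log hfx
      have := (div_lt_iff₀ hx0).1 hlow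
      nlinarith
    have hB : Real.log x + Real.log (deriv f x) ≤ Real.log (f (2*x)) := by
      rw [← Real.log_mul hx0.ne' hdx.ne']
      apply Real.log_le_log (mul_pos hx0 hdx)
      have := (lt_div_iff₀ hx0).1 hhigh
      nlinarith
    have heq : (Real.log x + Real.log (deriv f x))/Real.log x
        = 1 + Real.log (deriv f x)/Real.log x := by rw [add_div, div_self hlx.ne]
    constructor
    · have h3 := div_le_div_of_nonpos_of_le hlx.le hB
      rw [heq] at h3
      linarith
    · have h3 := div_le_div_of_nonpos_of_le hlx.le hA
      rw [heq] at h3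
      linarith
  have T2 : Tendsto (fun x => Real.log (f (2*x))/Real.log x)
      (nhdsWithin 0 (Set.Ioi 0)) (nhds α) := by
    have hcomp : Tendsto (fun x => Real.log (f (2*x))/Real.log (2*x))
        (nhdsWithin 0 (Set.Ioi 0)) (nhds α) := hreg.comp hmap2
    have hq : Tendsto (fun x : ℝ => Real.log (2*x)/Real.log x)
        (nhdsWithin 0 (Set.Ioi 0)) (nhds 1) := by
      have h1 := (hinvlog.const_mul (Real.log 2)).add_const 1
      rw [mul_zero, zero_add] at h1
      apply h1.congr'
      filter_upwards [hE] with x hx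
      obtain ⟨hx0, hxh⟩ := hx
      have hlx : Real.log x < 0 := Real.log_neg hx0 (by linarith)
      rw [Real.log_mul two_ne_zero hx0.ne', add_div, div_self hlx.ne, div_eq_mul_inv]
    have hmul := hcomp.mul hq
    rw [mul_one] at hmul
    apply hmul.congr'
    filter_upwards [hE] with x hx
    obtain ⟨hx0, hx2⟩ := hx
    have h2x : Real.log (2*x) < 0 := Real.log_neg (by linarith) (by linarith)
    have hlx : Real.log x < 0 := Real.log_neg hx0 (by linarith)
    have h2xne := h2x.ne
    have hlxne := hlx.ne
    field_simp
  exact tendsto_of_tendsto_of_tendsto_of_le_of_le' (T2.sub_const 1) (hreg.sub_const 1)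
    (chain.mono fun x h => h.1) (chain.mono fun x h => h.2)
end

section
/- Let f : [0,∞) → ℝ be a C¹ strictly convex function with f(0)=f'(0)=0 and suppose lim_{x→0⁺} log f(x)/log x = α with 1 < α < ∞. Then lim_{x→0⁺} log(x·f'(x) - f(x)) / log f'(x) = α/(α-1). -/
open Filter Real Set

private lemma rpow_tendsto_zero' {c : ℝ} (hc : 0 < c) :
    Tendsto (fun x : ℝ => x ^ c) (nhdsWithin 0 (Set.Ioi 0)) (nhds 0) := by
  have h1 : Tendsto (fun x : ℝ => Real.exp (c * Real.log x)) (nhdsWithin 0 (Set.Ioi 0))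
      (nhds 0) := by
    have := Real.tendsto_log_nhdsGT_zero.const_mul_atBot hc
    exact Real.tendsto_exp_atBot.comp this
  refine h1.congr' ?_
  filter_upwards [self_mem_nhdsWithin] with x (hx : (0:ℝ) < x)
  rw [Real.rpow_def_of_pos hx, mul_comm]

private lemma log_ratio_tendsto' {u : ℝ → ℝ} {β : ℝ}
    (h : ∀ ε : ℝ, 0 < ε → ∀ᶠ x in nhdsWithin 0 (Set.Ioi 0),
        0 < u x ∧ x ^ (β + ε) ≤ u x ∧ u x ≤ x ^ (β - ε)) :
    Tendsto (fun x => Real.log (u x) / Real.log x) (nhdsWithin 0 (Set.Ioi 0)) (nhds β) := by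
  rw [Metric.tendsto_nhds]
  intro ε hε
  filter_upwards [h (ε/2) (by positivity),
    Ioo_mem_nhdsGT_of_mem (left_mem_Ico.2 one_pos)] with x hx hx01
  obtain ⟨hu, hl, hr⟩ := hx
  obtain ⟨hx0, hx1⟩ := hx01
  have hlx : Real.log x < 0 := Real.log_neg hx0 hx1
  have h1 : (β + ε/2) * Real.log x ≤ Real.log (u x) := by
    have := Real.log_le_log (Real.rpow_pos_of_pos hx0 _) hl
    rwa [Real.log_rpow hx0] at this
  have h2 : Real.log (u x) ≤ (β - ε/2) * Real.log x := by
    have := Real.log_le_log hu hr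
    rwa [Real.log_rpow hx0] at this
  rw [Real.dist_eq, abs_lt]
  constructor
  · have h3 : β - ε/2 ≤ Real.log (u x) / Real.log x := by
      rw [le_div_iff_of_neg hlx]; exact h2
    linarith
  · have h3 : Real.log (u x) / Real.log x ≤ β + ε/2 := by
      rw [div_le_iff_of_neg hlx]; exact h1
    linarith

set_option maxHeartbeats 1000000 in
/-- If `f` is `C¹`, strictly convex on `[0,∞)` with `f 0 = f' 0 = 0` and
`log f(x)/log x → α`, then `log (x f'(x) - f(x)) / log f'(x) → α/(α-1)`. -/
theorem legendre_log_limit (f : ℝ → ℝ) (α : ℝ) (hα1 : 1 < α)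
    (hC1 : ContDiffOn ℝ 1 f (Set.Ici (0:ℝ)))
    (hconv : StrictConvexOn ℝ (Set.Ici (0:ℝ)) f)
    (hf0 : f 0 = 0) (hf'0 : deriv f 0 = 0)
    (hreg : Tendsto (fun x => Real.log (f x) / Real.log x)
      (nhdsWithin 0 (Set.Ioi 0)) (nhds α)) :
    Tendsto (fun x => Real.log (x * deriv f x - f x) / Real.log (deriv f x))
      (nhdsWithin 0 (Set.Ioi 0)) (nhds (α / (α - 1))) := by
  have hα0 : (0:ℝ) < α - 1 := by linarith
  have hcv : ConvexOn ℝ (Set.Ici (0:ℝ)) f := hconv.convexOn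
  have hdiff : ∀ x : ℝ, 0 < x → DifferentiableAt ℝ f x := fun x hx =>
    ((hC1.differentiableOn one_ne_zero) x hx.le).differentiableAt (Ici_mem_nhds hx)
  -- gradient inequality for convex functions
  have grad : ∀ x : ℝ, 0 < x → ∀ y : ℝ, 0 ≤ y → f x + deriv f x * (y - x) ≤ f y := by
    intro x hx y hy
    rcases lt_trichotomy x y with h | h | h
    · have h2 := hcv.deriv_le_slope (mem_Ici.2 hx.le) (mem_Ici.2 hy) h (hdiff x hx)
      rw [slope_def_field] at h2
      have h3 : (0:ℝ) < y - x := by linarith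
      rw [le_div_iff₀ h3] at h2
      linarith
    · simp [h]
    · have h2 := hcv.slope_le_deriv (mem_Ici.2 hy) (mem_Ici.2 hx.le) h (hdiff x hx)
      rw [slope_def_field] at h2
      have h3 : (0:ℝ) < x - y := by linarith
      rw [div_le_iff₀ h3] at h2
      linarith
  -- f is nonnegative on (0,∞)
  have hfnn : ∀ x : ℝ, 0 < x → 0 ≤ f x := by
    by_contra hcon
    push_neg at hcon
    obtain ⟨x₀, hx₀, hfx₀⟩ := hcon
    set c : ℝ := -(f x₀) / x₀ with hcdef
    have hc0 : 0 < c := by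
      apply div_pos _ hx₀; linarith
    have hkey : ∀ y : ℝ, 0 < y → y < x₀ → f y ≤ -(c * y) := by
      intro y hy hyx
      have hm := hcv.slope_mono (mem_Ici.2 (le_refl (0:ℝ)))
      have h1 : slope f 0 y ≤ slope f 0 x₀ :=
        hm ⟨mem_Ici.2 hy.le, by simp [hy.ne']⟩
          ⟨mem_Ici.2 (hy.trans hyx).le, by simp [(hy.trans hyx).ne']⟩ hyx.le
      rw [slope_def_field, slope_def_field, hf0] at h1
      simp only [sub_zero] at h1
      have h2 : f y / y ≤ -c := by
        rw [hcdef, neg_div, neg_neg]; exact h1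
      rw [div_le_iff₀ hy] at h2
      linarith
    -- contradiction with hreg
    have hev1 : ∀ᶠ y in nhdsWithin 0 (Set.Ioi 0),
        (1+α)/2 < Real.log (f y) / Real.log y := by
      have := (Metric.tendsto_nhds.1 hreg) ((α-1)/2) (by linarith)
      filter_upwards [this] with y hy
      rw [Real.dist_eq, abs_lt] at hy
      linarith [hy.1]
    have hev2 : ∀ᶠ y in nhdsWithin 0 (Set.Ioi 0),
        Real.log y < 2 * Real.log c / (α - 1) - 1 :=
      Real.tendsto_log_nhdsGT_zero.eventually (eventually_lt_atBot _)
    have hev2b : ∀ᶠ y in nhdsWithin 0 (Set.Ioi 0), Real.log y < -1 :=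
      Real.tendsto_log_nhdsGT_zero.eventually (eventually_lt_atBot _)
    have hev3 : ∀ᶠ y in nhdsWithin 0 (Set.Ioi 0), y ∈ Set.Ioo 0 x₀ :=
      Ioo_mem_nhdsGT_of_mem (left_mem_Ico.2 hx₀)
    obtain ⟨y, h1, h2, h2b, h3⟩ := (hev1.and (hev2.and (hev2b.and hev3))).exists
    have hy0 : 0 < y := h3.1
    have hyx : y < x₀ := h3.2
    have hfy : f y ≤ -(c * y) := hkey y hy0 hyx
    have hcy : 0 < c * y := mul_pos hc0 hy0
    have hly : Real.log y < 0 := by linarith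
    have h4 : Real.log (c*y) ≤ Real.log (-(f y)) := Real.log_le_log hcy (by linarith)
    rw [Real.log_neg_eq_log, Real.log_mul hc0.ne' hy0.ne'] at h4
    have h5 : Real.log (f y) / Real.log y ≤ (Real.log c + Real.log y) / Real.log y :=
      (div_le_div_right_of_neg hly).2 h4
    have h6 : (Real.log c + Real.log y) / Real.log y = Real.log c / Real.log y + 1 := by
      rw [add_div, div_self hly.ne]
    have h7 : Real.log c / Real.log y < (α - 1)/2 := by
      rcases le_or_gt 0 (Real.log c) with hl | hl
      · have : Real.log c / Real.log y ≤ 0 :=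
          div_nonpos_of_nonneg_of_nonpos hl hly.le
        linarith
      · rw [div_lt_iff_of_neg hly]
        have e2 : (α-1)/2 * (2*Real.log c/(α-1) - 1) = Real.log c - (α-1)/2 := by
          field_simp
        have m := mul_lt_mul_of_pos_left h2 (by linarith : (0:ℝ) < (α-1)/2)
        nlinarith [m, e2]
    linarith [h1, h5, h6 ▸ h5]
  -- main power bounds on f
  have hEf : ∀ ε : ℝ, 0 < ε → ε < α → ∀ᶠ x in nhdsWithin 0 (Set.Ioi 0),
      0 < f x ∧ x ^ (α + ε) ≤ f x ∧ f x ≤ x ^ (α - ε) := by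
    intro ε hε hεα
    have hev := (Metric.tendsto_nhds.1 hreg) ε hε
    filter_upwards [hev, Ioo_mem_nhdsGT_of_mem (left_mem_Ico.2 one_pos)] with x hx hx01
    obtain ⟨hx0, hx1⟩ := hx01
    rw [Real.dist_eq, abs_lt] at hx
    have hlx : Real.log x < 0 := Real.log_neg hx0 hx1
    have hrat1 : α - ε < Real.log (f x) / Real.log x := by linarith [hx.1]
    have hrat2 : Real.log (f x) / Real.log x < α + ε := by linarith [hx.2]
    have hfx0 : 0 < f x := by
      rcases (hfnn x hx0).lt_or_eq with h | h
      · exact h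
      · exfalso
        rw [← h, Real.log_zero, zero_div] at hrat1
        linarith
    have hl1 : (α + ε) * Real.log x < Real.log (f x) := by
      rw [div_lt_iff_of_neg hlx] at hrat2; exact hrat2
    have hl2 : Real.log (f x) < (α - ε) * Real.log x := by
      rw [lt_div_iff_of_neg hlx] at hrat1; exact hrat1
    refine ⟨hfx0, ?_, ?_⟩
    · calc x ^ (α+ε) = Real.exp ((α+ε) * Real.log x) := by
            rw [Real.rpow_def_of_pos hx0, mul_comm]
        _ ≤ Real.exp (Real.log (f x)) := Real.exp_le_exp.2 hl1.le
        _ = f x := Real.exp_log hfx0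
    · calc f x = Real.exp (Real.log (f x)) := (Real.exp_log hfx0).symm
        _ ≤ Real.exp ((α-ε) * Real.log x) := Real.exp_le_exp.2 hl2.le
        _ = x ^ (α-ε) := by rw [Real.rpow_def_of_pos hx0, mul_comm]
  -- main bounds on deriv f and the Legendre term
  have main : ∀ ε : ℝ, 0 < ε → ∀ᶠ x in nhdsWithin 0 (Set.Ioi 0),
      (0 < deriv f x ∧ x ^ (α - 1 + ε) ≤ deriv f x ∧ deriv f x ≤ x ^ (α - 1 - ε)) ∧
      (0 < x * deriv f x - f x ∧ x ^ (α + ε) ≤ x * deriv f x - f x ∧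
        x * deriv f x - f x ≤ x ^ (α - ε)) := by
    intro ε hε
    set δ : ℝ := min (ε/2) 1 with hδdef
    have hδ0 : 0 < δ := lt_min (by positivity) one_pos
    have hδε : δ ≤ ε/2 := min_le_left _ _
    have hδ1 : δ ≤ 1 := min_le_right _ _
    set ε₁ : ℝ := min (ε/4) (δ*(α-1)/(2*(2+δ))) with hε₁def
    have hε₁0 : 0 < ε₁ := lt_min (by positivity) (by positivity)
    have hε₁a : ε₁ ≤ ε/4 := min_le_left _ _
    have hε₁b : ε₁ ≤ δ*(α-1)/(2*(2+δ)) := min_le_right _ _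
    have hε₁m : ε₁ * (2*(2+δ)) ≤ δ*(α-1) := by
      rw [← le_div_iff₀ (by positivity)]; exact hε₁b
    have hε₁α : ε₁ < α := by
      have h1 : δ*(α-1) ≤ (α-1) := by nlinarith
      have h2 : (4:ℝ) ≤ 2*(2+δ) := by linarith
      have h3 : δ*(α-1)/(2*(2+δ)) ≤ (α-1)/4 :=
        div_le_div₀ hα0.le h1 (by norm_num) h2
      linarith
    have hγ1 : 0 < (1+δ)*(α-ε₁) - (α+δ+ε₁) := by nlinarith
    have hγ2 : 0 < (α+ε) - (α+δ+ε₁) := by linarith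
    have hγ3 : 0 < ε - ε₁ := by linarith
    obtain ⟨η, hη, hηsub⟩ :=
      mem_nhdsGT_iff_exists_Ioo_subset.1 (hEf ε₁ hε₁0 hε₁α)
    rw [Set.mem_Ioi] at hη
    have hP : ∀ z ∈ Set.Ioo (0:ℝ) η,
        0 < f z ∧ z ^ (α + ε₁) ≤ f z ∧ f z ≤ z ^ (α - ε₁) := fun z hz => hηsub hz
    have hevA : ∀ᶠ x in nhdsWithin 0 (Set.Ioi 0),
        x ^ (ε - ε₁) < (2:ℝ) ^ (-(α - ε₁)) :=
      (rpow_tendsto_zero' hγ3).eventually_lt_const (Real.rpow_pos_of_pos two_pos _)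
    have hevB : ∀ᶠ x : ℝ in nhdsWithin 0 (Set.Ioi 0),
        x ^ ((1+δ)*(α-ε₁) - (α+δ+ε₁)) < 1/2 :=
      (rpow_tendsto_zero' hγ1).eventually_lt_const (by norm_num : (0:ℝ) < 1/2)
    have hevC : ∀ᶠ x : ℝ in nhdsWithin 0 (Set.Ioi 0),
        x ^ ((α+ε) - (α+δ+ε₁)) < 1/2 :=
      (rpow_tendsto_zero' hγ2).eventually_lt_const (by norm_num : (0:ℝ) < 1/2)
    have hm0 : (0:ℝ) < min (η/2) 1 := lt_min (by positivity) one_pos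
    filter_upwards [hevA, hevB, hevC, Ioo_mem_nhdsGT_of_mem (left_mem_Ico.2 hm0)]
      with x hA hB hC hx'
    have hx0 : 0 < x := hx'.1
    have hxη2 : x < η/2 := lt_of_lt_of_le hx'.2 (min_le_left _ _)
    have hx1 : x < 1 := lt_of_lt_of_le hx'.2 (min_le_right _ _)
    set y : ℝ := x ^ (1+δ) with hydef
    have hy0 : 0 < y := Real.rpow_pos_of_pos hx0 _
    have hyx : y ≤ x := by
      calc y ≤ x ^ (1:ℝ) := Real.rpow_le_rpow_of_exponent_ge hx0 hx1.le (by linarith)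
        _ = x := Real.rpow_one x
    obtain ⟨hfx, hfxl, hfxu⟩ := hP x ⟨hx0, by linarith⟩
    obtain ⟨hf2x, hf2xl, hf2xu⟩ := hP (2*x) ⟨by linarith, by linarith⟩
    obtain ⟨hfy, hfyl, hfyu⟩ := hP y ⟨hy0, by linarith [hyx]⟩
    -- gradient consequences
    have hb : f x ≤ x * deriv f x := by
      have h := grad x hx0 0 le_rfl
      rw [hf0] at h
      ring_nf at h ⊢
      linarith [h]
    have hc : x * deriv f x ≤ f (2*x) - f x := by
      have h := grad x hx0 (2*x) (by linarith : (0:ℝ) ≤ 2*x)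
      ring_nf at h ⊢
      linarith [h]
    have hd : y * deriv f x - f y ≤ x * deriv f x - f x := by
      have h := grad x hx0 y hy0.le
      ring_nf at h ⊢
      linarith [h]
    -- lower bound on deriv f x
    have hd2 : x ^ (α + ε₁ - 1) ≤ deriv f x := by
      have h1 : x ^ (α + ε₁) ≤ x * deriv f x := hfxl.trans hb
      rw [Real.rpow_sub hx0, Real.rpow_one, div_le_iff₀ hx0]
      linarith [h1]
    have hdl : x ^ (α - 1 + ε) ≤ deriv f x :=
      (Real.rpow_le_rpow_of_exponent_ge hx0 hx1.le (by linarith)).trans hd2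
    have hd0 : 0 < deriv f x := lt_of_lt_of_le (Real.rpow_pos_of_pos hx0 _) hdl
    -- key upper bound : x * deriv f x ≤ x ^ (α - ε)
    have key2 : (2:ℝ)^(α-ε₁) * x^(α-ε₁) ≤ x^(α-ε) := by
      have e1 : x^(α-ε₁) = x^(α-ε) * x^(ε-ε₁) := by
        rw [← Real.rpow_add hx0]; congr 1; ring
      have h2p : (0:ℝ) < (2:ℝ)^(α-ε₁) := Real.rpow_pos_of_pos two_pos _
      have h4 : (2:ℝ)^(α-ε₁) * x^(ε-ε₁) ≤ 1 := by
        have e2 : (2:ℝ)^(-(α-ε₁)) = ((2:ℝ)^(α-ε₁))⁻¹ := Real.rpow_neg (by norm_num) _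
        rw [e2] at hA
        calc (2:ℝ)^(α-ε₁) * x^(ε-ε₁) ≤ (2:ℝ)^(α-ε₁) * ((2:ℝ)^(α-ε₁))⁻¹ :=
              mul_le_mul_of_nonneg_left hA.le h2p.le
          _ = 1 := mul_inv_cancel₀ h2p.ne'
      calc (2:ℝ)^(α-ε₁) * x^(α-ε₁) = x^(α-ε) * ((2:ℝ)^(α-ε₁) * x^(ε-ε₁)) := by
            rw [e1]; ring
        _ ≤ x^(α-ε) * 1 :=
            mul_le_mul_of_nonneg_left h4 (Real.rpow_pos_of_pos hx0 _).le
        _ = x^(α-ε) := mul_one _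
    have hxd : x * deriv f x ≤ x ^ (α - ε) := by
      have h1 : x * deriv f x ≤ (2*x) ^ (α - ε₁) := by
        have : x * deriv f x ≤ f (2*x) := by linarith [hc, hfx]
        exact this.trans hf2xu
      have h2 : (2*x) ^ (α - ε₁) = 2 ^ (α-ε₁) * x ^ (α-ε₁) :=
        Real.mul_rpow (by norm_num) hx0.le
      rw [h2] at h1
      exact h1.trans key2
    have hdu : deriv f x ≤ x ^ (α - 1 - ε) := by
      have e3 : x * x^(α-1-ε) = x ^ (α - ε) := by
        nth_rewrite 1 [← Real.rpow_one x]
        rw [← Real.rpow_add hx0]; congr 1; ring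
      rw [← e3] at hxd
      exact le_of_mul_le_mul_left hxd hx0
    -- bounds for the Legendre term
    have hgu : x * deriv f x - f x ≤ x ^ (α - ε) := by linarith [hxd, hfx]
    have hyd : x^(α+δ+ε₁) ≤ y * deriv f x := by
      have h1 : y * x^(α+ε₁-1) ≤ y * deriv f x :=
        mul_le_mul_of_nonneg_left hd2 hy0.le
      have e : y * x^(α+ε₁-1) = x^(α+δ+ε₁) := by
        rw [hydef, ← Real.rpow_add hx0]; congr 1; ring
      linarith [h1, e ▸ h1]
    have hfyu' : f y ≤ (1/2) * x^(α+δ+ε₁) := by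
      have e : y ^ (α-ε₁) = x^((1+δ)*(α-ε₁)) := (Real.rpow_mul hx0.le _ _).symm
      have e2 : x^((1+δ)*(α-ε₁)) = x^(α+δ+ε₁) * x^((1+δ)*(α-ε₁) - (α+δ+ε₁)) := by
        rw [← Real.rpow_add hx0]; congr 1; ring
      calc f y ≤ y^(α-ε₁) := hfyu
        _ = x^(α+δ+ε₁) * x^((1+δ)*(α-ε₁) - (α+δ+ε₁)) := by rw [e, e2]
        _ ≤ x^(α+δ+ε₁) * (1/2) :=
            mul_le_mul_of_nonneg_left hB.le (Real.rpow_pos_of_pos hx0 _).le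
        _ = (1/2) * x^(α+δ+ε₁) := by ring
    have hglow1 : (1/2) * x^(α+δ+ε₁) ≤ x * deriv f x - f x := by
      linarith [hd, hyd, hfyu']
    have hgl : x^(α+ε) ≤ x * deriv f x - f x := by
      have e : x^(α+ε) = x^(α+δ+ε₁) * x^((α+ε) - (α+δ+ε₁)) := by
        rw [← Real.rpow_add hx0]; congr 1; ring
      have h1 : x^(α+ε) ≤ (1/2) * x^(α+δ+ε₁) := by
        rw [e]
        calc x^(α+δ+ε₁) * x^((α+ε) - (α+δ+ε₁)) ≤ x^(α+δ+ε₁) * (1/2) :=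
              mul_le_mul_of_nonneg_left hC.le (Real.rpow_pos_of_pos hx0 _).le
          _ = (1/2) * x^(α+δ+ε₁) := by ring
      linarith [hglow1]
    have hg0 : 0 < x * deriv f x - f x :=
      lt_of_lt_of_le (Real.rpow_pos_of_pos hx0 _) hgl
    exact ⟨⟨hd0, hdl, hdu⟩, ⟨hg0, hgl, hgu⟩⟩
  -- assemble
  have T1 : Tendsto (fun x => Real.log (deriv f x) / Real.log x)
      (nhdsWithin 0 (Set.Ioi 0)) (nhds (α - 1)) :=
    log_ratio_tendsto' (fun ε hε => (main ε hε).mono fun x hx => hx.1)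
  have T2 : Tendsto (fun x => Real.log (x * deriv f x - f x) / Real.log x)
      (nhdsWithin 0 (Set.Ioi 0)) (nhds α) :=
    log_ratio_tendsto' (fun ε hε => (main ε hε).mono fun x hx => hx.2)
  have T3 := T2.div T1 (ne_of_gt hα0)
  refine Filter.Tendsto.congr' ?_ T3
  filter_upwards [Ioo_mem_nhdsGT_of_mem (left_mem_Ico.2 one_pos)] with x hx
  exact div_div_div_cancel_right₀ (Real.log_neg hx.1 hx.2).ne _ _
end

section
/- Let f : [0,∞) → ℝ be C¹, strictly convex, even-extendable with f(0)=f'(0)=0, approximately α-regular with 1 < α < ∞. Then its Legendre transform f*(y) = sup_x (xy - f(x)) is approximately α*-regular at 0 with 1/α + 1/α* = 1. -/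
open Filter

set_option maxHeartbeats 1000000 in
/-- The Legendre transform of an even approximately `α`-regular function
(`1 < α < ∞`) is approximately `α*`-regular, with `1/α + 1/α* = 1`. -/
theorem legendre_transform_approx_regular (f : ℝ → ℝ) (α αs : ℝ)
    (hα : 1 < α) (hdual : 1 / α + 1 / αs = 1)
    (heven : ∀ t : ℝ, f (-t) = f t)
    (hC1 : ContDiff ℝ 1 f) (hconv : StrictConvexOn ℝ Set.univ f)
    (hf0 : f 0 = 0) (hf'0 : deriv f 0 = 0)
    (hreg : Tendsto (fun t : ℝ => Real.log (f t) / Real.log |t|)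
      (nhdsWithin 0 {(0:ℝ)}ᶜ) (nhds α)) :
    Tendsto (fun y : ℝ =>
        Real.log (sSup (Set.range fun x : ℝ => x * y - f x)) / Real.log |y|)
      (nhdsWithin 0 {(0:ℝ)}ᶜ) (nhds αs) := by
  have hα0 : (0:ℝ) < α := lt_trans one_pos hα
  have hα1 : (0:ℝ) < α - 1 := by linarith
  -- basic facts about αs
  have h1a : 1 / αs = 1 - 1 / α := by linarith
  have h2a : (0:ℝ) < 1 - 1 / α := by
    have : 1 / α < 1 := by rw [div_lt_one hα0]; exact hα
    linarith
  have hαs_pos : 0 < αs := by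
    have : (0:ℝ) < 1 / αs := h1a ▸ h2a
    exact one_div_pos.mp this
  have hαs : αs = α / (α - 1) := by
    have hαne : α ≠ 0 := ne_of_gt hα0
    have hαsne : αs ≠ 0 := ne_of_gt hαs_pos
    field_simp at hdual ⊢
    linarith [hdual]
  -- positivity of f away from 0
  have hfpos : ∀ t : ℝ, t ≠ 0 → 0 < f t := by
    intro t ht
    have hne : t ≠ -t := by intro h; apply ht; linarith
    have h2 := hconv.2 (Set.mem_univ t) (Set.mem_univ (-t)) hne
      (by norm_num : (0:ℝ) < 1/2) (by norm_num : (0:ℝ) < 1/2) (by norm_num)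
    rw [heven] at h2
    have h3 : (1/2:ℝ) • t + (1/2:ℝ) • (-t) = 0 := by
      rw [smul_eq_mul, smul_eq_mul]; ring
    rw [h3, hf0] at h2
    simp only [smul_eq_mul] at h2
    linarith
  have hfnn : ∀ t : ℝ, 0 ≤ f t := by
    intro t
    rcases eq_or_ne t 0 with rfl | ht
    · simp [hf0]
    · exact (hfpos t ht).le
  set F : ℝ → ℝ := fun y => sSup (Set.range fun x : ℝ => x * y - f x) with hFdef
  have hFeven : ∀ y : ℝ, F (-y) = F y := by
    intro y
    have : (Set.range fun x : ℝ => x * (-y) - f x)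
        = (Set.range fun x : ℝ => x * y - f x) := by
      ext z
      constructor
      · rintro ⟨x, rfl⟩; exact ⟨-x, by simp only [heven]; ring⟩
      · rintro ⟨x, rfl⟩; exact ⟨-x, by simp only [heven]; ring⟩
    simp only [hFdef, this]
  -- the key one-sided limit
  have hright : Tendsto (fun y : ℝ => Real.log (F y) / Real.log |y|)
      (nhdsWithin 0 (Set.Ioi 0)) (nhds αs) := by
    rw [Metric.tendsto_nhds]
    intro ε hε
    -- choose θ via continuity of the conjugate-exponent map
    have hcont : ContinuousAt (fun x : ℝ => x / (x - 1)) α := by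
      apply ContinuousAt.div continuousAt_id
      · exact (continuous_id.sub continuous_const).continuousAt
      · exact sub_ne_zero.mpr (ne_of_gt hα)
    obtain ⟨θ0, hθ0, hball⟩ := Metric.continuousAt_iff.mp hcont (ε/2) (half_pos hε)
    set θ : ℝ := min (θ0/2) ((α-1)/2) with hθdef
    have hθpos : 0 < θ := lt_min (half_pos hθ0) (half_pos hα1)
    have hθsmall : θ < α - 1 := lt_of_le_of_lt (min_le_right _ _) (by linarith)
    have hθ0' : θ < θ0 := lt_of_le_of_lt (min_le_left _ _) (by linarith)
    set β : ℝ := α - θ with hβdef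
    set γ : ℝ := α + θ with hγdef
    have hβ1 : 1 < β := by simp only [hβdef]; linarith
    have hγ1 : 1 < γ := by simp only [hγdef]; linarith
    set β' : ℝ := β / (β - 1) with hβ'def
    set γ' : ℝ := γ / (γ - 1) with hγ'def
    have hβ'cl : |β' - αs| < ε/2 := by
      have := hball (x := β) (by rw [Real.dist_eq]; simp [hβdef, abs_of_nonneg hθpos.le]; linarith)
      rwa [Real.dist_eq, ← hαs] at this
    have hγ'cl : |γ' - αs| < ε/2 := by
      have := hball (x := γ) (by rw [Real.dist_eq]; simp [hγdef, abs_of_nonneg hθpos.le]; linarith)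
      rwa [Real.dist_eq, ← hαs] at this
    have hβ'1 : 1 < β' := by
      rw [hβ'def, lt_div_iff₀ (by linarith : (0:ℝ) < β - 1)]
      linarith
    have hγ'1 : 1 < γ' := by
      rw [hγ'def, lt_div_iff₀ (by linarith : (0:ℝ) < γ - 1)]
      linarith
    -- extract δ from the regularity hypothesis
    obtain ⟨δ0, hδ0pos, hδ0⟩ := Metric.tendsto_nhdsWithin_nhds.mp hreg θ hθpos
    set δ : ℝ := min δ0 1 with hδdef
    have hδpos : 0 < δ := lt_min hδ0pos one_pos
    have hδ1 : δ ≤ 1 := min_le_right _ _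
    have hfb : ∀ t : ℝ, 0 < t → t < δ → t ^ γ < f t ∧ f t < t ^ β := by
      intro t ht htδ
      have htne : (t:ℝ) ≠ 0 := ne_of_gt ht
      have ht1 : t < 1 := lt_of_lt_of_le htδ hδ1
      have hmem : t ∈ ({(0:ℝ)}ᶜ : Set ℝ) := by simpa using htne
      have hdist : dist t (0:ℝ) < δ0 := by
        rw [Real.dist_eq, sub_zero, abs_of_pos ht]
        exact lt_of_lt_of_le htδ (min_le_left _ _)
      have hlt := hδ0 hmem hdist
      rw [Real.dist_eq] at hlt
      rw [abs_of_pos ht] at hlt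
      have hlogt : Real.log t < 0 := Real.log_neg ht ht1
      have hfpt := hfpos t htne
      obtain ⟨hlt1, hlt2⟩ := abs_sub_lt_iff.mp hlt
      constructor
      · -- t ^ γ < f t
        have h1 : Real.log (f t) / Real.log t < γ := by
          simp only [hγdef]; linarith
        rw [div_lt_iff_of_neg hlogt] at h1
        have h2 : Real.log (t ^ γ) < Real.log (f t) := by
          rw [Real.log_rpow ht]; exact h1
        exact (Real.log_lt_log_iff (Real.rpow_pos_of_pos ht γ) hfpt).mp h2
      · -- f t < t ^ β
        have h1 : β < Real.log (f t) / Real.log t := by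
          simp only [hβdef]; linarith
        rw [lt_div_iff_of_neg hlogt] at h1
        have h2 : Real.log (f t) < Real.log (t ^ β) := by
          rw [Real.log_rpow ht]; exact h1
        exact (Real.log_lt_log_iff hfpt (Real.rpow_pos_of_pos ht β)).mp h2
    -- slope constant
    set m : ℝ := (f δ - f (δ/2)) / (δ/2) with hmdef
    have hδ2pos : 0 < δ/2 := half_pos hδpos
    have hfδ2pos : 0 < f (δ/2) := hfpos _ (ne_of_gt hδ2pos)
    have hslope1 := hconv.convexOn.slope_mono_adjacent (Set.mem_univ (0:ℝ))
      (Set.mem_univ δ) hδ2pos (half_lt_self hδpos)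
    have hδδ2 : δ - δ/2 = δ/2 := by ring
    rw [hf0, hδδ2] at hslope1
    have hmpos : 0 < m := by
      have h1 : 0 < (f (δ/2) - 0) / (δ/2 - 0) := by
        rw [sub_zero, sub_zero]
        exact div_pos hfδ2pos hδ2pos
      exact lt_of_lt_of_le h1 hslope1
    have hlin : ∀ x : ℝ, δ ≤ x → f δ + m * (x - δ) ≤ f x := by
      intro x hx
      rcases eq_or_lt_of_le hx with rfl | hlt
      · simp
      · have hs := hconv.convexOn.slope_mono_adjacent (Set.mem_univ (δ/2))
          (Set.mem_univ x) (half_lt_self hδpos) hlt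
        rw [hδδ2] at hs
        have hxδ : 0 < x - δ := sub_pos.mpr hlt
        have hm' : m ≤ (f x - f δ) / (x - δ) := hs
        rw [le_div_iff₀ hxδ] at hm'
        linarith
    -- key pointwise upper bound
    have hkey : ∀ y : ℝ, 0 < y → y < m → y * δ < f δ →
        ∀ x : ℝ, x * y - f x ≤ y ^ γ' := by
      intro y hy hym hyδ x
      have hyγ'pos : 0 < y ^ γ' := Real.rpow_pos_of_pos hy _
      rcases le_or_gt x 0 with hx | hx
      · have h1 : x * y ≤ 0 := mul_nonpos_of_nonpos_of_nonneg hx hy.le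
        have := hfnn x
        linarith
      rcases lt_or_ge x δ with hxδ | hxδ
      · have hconj : γ.HolderConjugate γ' :=
          (Real.holderConjugate_iff_eq_conjExponent hγ1).mpr rfl
        have hyoung := Real.young_inequality_of_nonneg hx.le hy.le hconj
        have h1 : x ^ γ < f x := (hfb x hx hxδ).1
        have h2 : x ^ γ / γ ≤ x ^ γ :=
          div_le_self (Real.rpow_nonneg hx.le _) hγ1.le
        have h3 : y ^ γ' / γ' ≤ y ^ γ' := div_le_self hyγ'pos.le hγ'1.le
        linarith
      · have hl := hlin x hxδ
        have hym' : y - m < 0 := by linarith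
        have h4 : (x - δ) * (y - m) ≤ 0 :=
          mul_nonpos_of_nonneg_of_nonpos (by linarith) (by linarith)
        linarith [h4, hl, hyδ, hyγ'pos]
    -- lower bound
    have hlow : ∀ y : ℝ, 0 < y → y < m → y * δ < f δ → y/2 < δ ^ (β-1) →
        (y/2) ^ β' ≤ F y := by
      intro y hy hym hyδ hysmall
      have hy2 : 0 < y/2 := half_pos hy
      have hβ1' : 0 < β - 1 := by linarith
      set x : ℝ := (y/2) ^ ((β-1)⁻¹) with hxdef
      have hxpos : 0 < x := Real.rpow_pos_of_pos hy2 _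
      have hxδ : x < δ := by
        have h1 : x < (δ ^ (β-1)) ^ ((β-1)⁻¹) :=
          Real.rpow_lt_rpow hy2.le hysmall (by positivity)
        rwa [← Real.rpow_mul hδpos.le, mul_inv_cancel₀ (ne_of_gt hβ1'),
          Real.rpow_one] at h1
      have hfx := (hfb x hxpos hxδ).2
      have hxβ1 : x ^ (β-1 : ℝ) = y/2 := by
        rw [hxdef, ← Real.rpow_mul hy2.le, inv_mul_cancel₀ (ne_of_gt hβ1'),
          Real.rpow_one]
      have hxβ : x ^ (β:ℝ) = x * (y/2) := by
        have hβeq : (β:ℝ) = 1 + (β - 1) := by ring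
        rw [hβeq, Real.rpow_add hxpos, Real.rpow_one, hxβ1]
      have hβ'eq : (β-1)⁻¹ + 1 = β' := by
        rw [hβ'def]
        field_simp
        ring
      have hval : x * y - x ^ (β:ℝ) = (y/2) ^ β' := by
        calc x * y - x ^ (β:ℝ) = x * (y/2) := by rw [hxβ]; ring
        _ = (y/2) ^ ((β-1)⁻¹ + 1) := by
            rw [Real.rpow_add hy2, Real.rpow_one]
        _ = (y/2) ^ β' := by rw [hβ'eq]
      have hbdd : BddAbove (Set.range fun x : ℝ => x * y - f x) := by
        refine ⟨y ^ γ', ?_⟩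
        rintro z ⟨x', rfl⟩
        exact hkey y hy hym hyδ x'
      have hmem : x * y - f x ≤ F y := le_csSup hbdd (Set.mem_range_self x)
      calc (y/2) ^ β' = x * y - x ^ (β:ℝ) := hval.symm
      _ ≤ x * y - f x := by linarith
      _ ≤ F y := hmem
    -- upper bound
    have hupp : ∀ y : ℝ, 0 < y → y < m → y * δ < f δ → F y ≤ y ^ γ' := by
      intro y hy hym hyδ
      apply csSup_le (Set.range_nonempty _)
      rintro z ⟨x', rfl⟩
      exact hkey y hy hym hyδ x'
    -- eventual estimates
    set r : ℝ := min m (min (f δ / δ) (min 1 (min (2 * δ ^ (β-1))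
      (Real.exp (-(2 * β' * Real.log 2) / ε))))) with hrdef
    have hrpos : 0 < r := by
      refine lt_min hmpos (lt_min (div_pos (hfpos δ (ne_of_gt hδpos)) hδpos)
        (lt_min one_pos (lt_min ?_ (Real.exp_pos _))))
      positivity
    have hev : ∀ᶠ y in nhdsWithin (0:ℝ) (Set.Ioi 0), y ∈ Set.Ioo (0:ℝ) r :=
      eventually_of_mem (Ioo_mem_nhdsGT_of_mem ⟨le_refl 0, hrpos⟩) (fun _ h => h)
    filter_upwards [hev] with y hy
    obtain ⟨hy0, hyr⟩ := hy
    simp only [hrdef, lt_min_iff] at hyr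
    obtain ⟨hym, hyfδ, hy1, hy2δ, hyexp⟩ := hyr
    have hyδ : y * δ < f δ := (lt_div_iff₀ hδpos).mp hyfδ
    have hysmall : y/2 < δ ^ (β-1) := by linarith
    have hy2 : 0 < y/2 := half_pos hy0
    have hFub := hupp y hy0 hym hyδ
    have hFlb := hlow y hy0 hym hyδ hysmall
    have hFpos : 0 < F y := lt_of_lt_of_le (Real.rpow_pos_of_pos hy2 _) hFlb
    have hlogy : Real.log y < 0 := Real.log_neg hy0 hy1
    have hβ'pos : 0 < β' := by linarith
    -- lower bound on the ratio
    have hrlo : γ' ≤ Real.log (F y) / Real.log y := by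
      rw [le_div_iff_of_neg hlogy]
      calc Real.log (F y) ≤ Real.log (y ^ γ') :=
        (Real.log_le_log_iff hFpos (Real.rpow_pos_of_pos hy0 _)).mpr hFub
      _ = γ' * Real.log y := Real.log_rpow hy0 γ'
    -- upper bound on the ratio
    have hlogexp : Real.log y < -(2 * β' * Real.log 2) / ε := by
      have := Real.log_lt_log hy0 hyexp
      rwa [Real.log_exp] at this
    have hlog2pos : (0:ℝ) < Real.log 2 := Real.log_pos (by norm_num)
    have hεmul : ε / 2 * Real.log y < -(β' * Real.log 2) := by
      have h5 := mul_lt_mul_of_pos_left hlogexp (half_pos hε)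
      have hεne : ε ≠ 0 := ne_of_gt hε
      have h6 : ε / 2 * (-(2 * β' * Real.log 2) / ε) = -(β' * Real.log 2) := by
        calc ε / 2 * (-(2 * β' * Real.log 2) / ε)
            = (ε / ε) * (-(β' * Real.log 2)) := by ring
        _ = -(β' * Real.log 2) := by rw [div_self hεne, one_mul]
      rw [h6] at h5
      linarith
    have hlby : β' * (Real.log y - Real.log 2) ≤ Real.log (F y) := by
      have h7 : Real.log ((y/2) ^ β') ≤ Real.log (F y) :=
        (Real.log_le_log_iff (Real.rpow_pos_of_pos hy2 _) hFpos).mpr hFlb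
      rwa [Real.log_rpow hy2, Real.log_div (ne_of_gt hy0) two_ne_zero] at h7
    have hrhi : Real.log (F y) / Real.log y ≤ β' + ε/2 := by
      rw [div_le_iff_of_neg hlogy]
      linarith [hlby, hεmul]
    -- conclude
    rw [Real.dist_eq, abs_of_pos hy0, abs_sub_lt_iff]
    obtain ⟨hb1, hb2⟩ := abs_sub_lt_iff.mp hβ'cl
    obtain ⟨hc1, hc2⟩ := abs_sub_lt_iff.mp hγ'cl
    constructor
    · linarith
    · linarith
  -- combine the two one-sided limits
  have hgoal : Tendsto (fun y : ℝ => Real.log (F y) / Real.log |y|)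
      (nhdsWithin 0 {(0:ℝ)}ᶜ) (nhds αs) := by
    rw [← nhdsLT_sup_nhdsGT (0:ℝ), tendsto_sup]
    constructor
    · have hneg : Tendsto (fun y : ℝ => -y) (nhdsWithin (0:ℝ) (Set.Iio 0))
          (nhdsWithin (0:ℝ) (Set.Ioi 0)) := by
        apply tendsto_nhdsWithin_of_tendsto_nhds_of_eventually_within
        · have h1 : Tendsto (fun y : ℝ => -y) (nhds (0:ℝ)) (nhds (0:ℝ)) := by
            simpa using (continuous_neg.tendsto (0:ℝ))
          exact h1.mono_left nhdsWithin_le_nhds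
        · filter_upwards [self_mem_nhdsWithin] with y hy
          exact Set.mem_Ioi.mpr (neg_pos.mpr (Set.mem_Iio.mp hy))
      have heq : (fun y : ℝ => Real.log (F y) / Real.log |y|)
          = (fun y : ℝ => Real.log (F (-y)) / Real.log |(-y)|) := by
        funext y
        rw [hFeven, abs_neg]
      rw [heq]
      exact hright.comp hneg
    · exact hright
  exact hgoal
end

section
/- Let Ω ⊂ ℝⁿ be a bounded open convex set and F(x,ξ) = (|ξ|/2)(1/|x x⁺| + 1/|x x⁻|) its Finsler metric, where x± are the intersections of the line x + ℝξ with ∂Ω. Then F(x,·) is a norm on ℝⁿ for each x ∈ Ω. -/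
open Set Bornology

/-- The Finsler metric `F(x,ξ) = (‖ξ‖/2)(1/|x x⁺| + 1/|x x⁻|)` of a bounded open convex
set is a norm on `ℝⁿ` at each point `x ∈ Ω`. -/
theorem hilbert_finsler_is_norm (n : ℕ) (Ω : Set (EuclideanSpace ℝ (Fin n)))
    (hΩ : IsOpen Ω) (hconv : Convex ℝ Ω) (hbdd : Bornology.IsBounded Ω)
    (F : EuclideanSpace ℝ (Fin n) → EuclideanSpace ℝ (Fin n) → ℝ)
    (hF0 : ∀ x, F x 0 = 0)
    (hF : ∀ x ∈ Ω, ∀ ξ : EuclideanSpace ℝ (Fin n), ξ ≠ 0 →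
      ∀ sp sm : ℝ, 0 < sp → sm < 0 →
        x + sp • ξ ∈ frontier Ω → x + sm • ξ ∈ frontier Ω →
        F x ξ = ‖ξ‖ / 2 * (1 / dist x (x + sp • ξ) + 1 / dist x (x + sm • ξ)))
    (x : EuclideanSpace ℝ (Fin n)) (hx : x ∈ Ω) :
    (∀ ξ, 0 ≤ F x ξ) ∧
    (∀ ξ, F x ξ = 0 ↔ ξ = 0) ∧
    (∀ (c : ℝ) (ξ), F x (c • ξ) = |c| * F x ξ) ∧
    (∀ ξ η, F x (ξ + η) ≤ F x ξ + F x η) := by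
  classical
  set s : Set (EuclideanSpace ℝ (Fin n)) := (fun y => x + y) ⁻¹' Ω with hs_def
  have hs_conv : Convex ℝ s := hconv.translate_preimage_right x
  have hs_open : IsOpen s := hΩ.preimage (by continuity)
  have hs0 : (0 : EuclideanSpace ℝ (Fin n)) ∈ s := by simp [hs_def, hx]
  have hs_nhds : s ∈ nhds (0 : EuclideanSpace ℝ (Fin n)) := hs_open.mem_nhds hs0
  have hs_abs : Absorbent ℝ s := absorbent_nhds_zero hs_nhds
  have hs_bdd : Bornology.IsBounded s := by
    obtain ⟨r, hr⟩ := (Metric.isBounded_iff_subset_closedBall x).1 hbdd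
    refine (Metric.isBounded_iff_subset_closedBall 0).2 ⟨r, fun y hy => ?_⟩
    have := hr hy
    simp only [Metric.mem_closedBall] at this ⊢
    calc dist y 0 = dist (x + y) x := by
          rw [dist_eq_norm, dist_eq_norm]; simp
      _ ≤ r := this
  have hs_vnb : Bornology.IsVonNBounded ℝ s := by
    rw [NormedSpace.isVonNBounded_iff]; exact hs_bdd
  set g : EuclideanSpace ℝ (Fin n) → ℝ := gauge s with hg_def
  have hg_pos : ∀ ξ, ξ ≠ 0 → 0 < g ξ := fun ξ hξ => (gauge_pos hs_abs hs_vnb).2 hξ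
  -- frontier characterization
  have hfront : ∀ y, (x + y ∈ frontier Ω) ↔ g y = 1 := by
    intro y
    have h1 : frontier s = (fun y => x + y) ⁻¹' frontier Ω := by
      have : s = (Homeomorph.addLeft x) ⁻¹' Ω := rfl
      rw [this, ← Homeomorph.preimage_frontier]
      rfl
    constructor
    · intro h
      have hy : y ∈ frontier s := by rw [h1]; exact h
      exact (gauge_eq_one_iff_mem_frontier hs_conv hs_nhds).2 hy
    · intro h
      have := mem_frontier_of_gauge_eq_one hs_conv hs0 hs_abs h
      rw [h1] at this; exact this
  -- F formula
  have key : ∀ ξ, ξ ≠ 0 → F x ξ = (g ξ + g (-ξ)) / 2 := by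
    intro ξ hξ
    have hgp := hg_pos ξ hξ
    have hgm := hg_pos (-ξ) (by simpa using hξ)
    set sp : ℝ := (g ξ)⁻¹ with hsp
    set sm : ℝ := -(g (-ξ))⁻¹ with hsm
    have hsp0 : 0 < sp := inv_pos.2 hgp
    have hsm0 : sm < 0 := neg_neg_iff_pos.2 (inv_pos.2 hgm)
    have hfp : x + sp • ξ ∈ frontier Ω := by
      rw [hfront]
      rw [hg_def, gauge_smul_of_nonneg hsp0.le, hsp]
      exact inv_mul_cancel₀ hgp.ne'
    have hfm : x + sm • ξ ∈ frontier Ω := by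
      rw [hfront]
      have : sm • ξ = ((g (-ξ))⁻¹) • (-ξ) := by rw [hsm]; simp [neg_smul, smul_neg]
      rw [this, hg_def, gauge_smul_of_nonneg (inv_pos.2 hgm).le]
      exact inv_mul_cancel₀ hgm.ne'
    have hξn : (0:ℝ) < ‖ξ‖ := norm_pos_iff.2 hξ
    have hd1 : dist x (x + sp • ξ) = sp * ‖ξ‖ := by
      rw [dist_eq_norm]
      have h : x - (x + sp • ξ) = -(sp • ξ) := by abel
      rw [h, norm_neg, norm_smul, Real.norm_eq_abs, abs_of_pos hsp0]
    have habs : |sm| = (g (-ξ))⁻¹ := by rw [abs_of_neg hsm0, hsm, neg_neg]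
    have hd2 : dist x (x + sm • ξ) = (g (-ξ))⁻¹ * ‖ξ‖ := by
      rw [dist_eq_norm]
      have h : x - (x + sm • ξ) = -(sm • ξ) := by abel
      rw [h, norm_neg, norm_smul, Real.norm_eq_abs, habs]
    have hne : ‖ξ‖ ≠ 0 := hξn.ne'
    rw [hF x hx ξ hξ sp sm hsp0 hsm0 hfp hfm, hd1, hd2, hsp]
    rw [one_div, one_div, mul_inv, mul_inv, inv_inv, inv_inv]
    field_simp
  have key' : ∀ ξ, F x ξ = (g ξ + g (-ξ)) / 2 := by
    intro ξ
    by_cases hξ : ξ = 0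
    · simp [hξ, hF0, hg_def, gauge_zero]
    · exact key ξ hξ
  refine ⟨?_, ?_, ?_, ?_⟩
  · intro ξ
    rw [key']
    have h1 : 0 ≤ g ξ := gauge_nonneg _
    have h2 : 0 ≤ g (-ξ) := gauge_nonneg _
    linarith
  · intro ξ
    rw [key']
    constructor
    · intro h
      by_contra hξ
      have h1 := hg_pos ξ hξ
      have h2 := gauge_nonneg (s := s) (-ξ)
      nlinarith
    · intro h; simp [h, hg_def, gauge_zero]
  · intro c ξ
    rw [key', key']
    rcases le_or_gt 0 c with hc | hc
    · rw [abs_of_nonneg hc]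
      have h1 : g (c • ξ) = c * g ξ := gauge_smul_of_nonneg hc ξ
      have h2 : g (-(c • ξ)) = c * g (-ξ) := by
        rw [show -(c • ξ) = c • (-ξ) by simp]; exact gauge_smul_of_nonneg hc (-ξ)
      rw [h1, h2]; ring
    · rw [abs_of_neg hc]
      have h1 : g (c • ξ) = -c * g (-ξ) := by
        rw [show c • ξ = (-c) • (-ξ) by simp]; exact gauge_smul_of_nonneg (by linarith) (-ξ)
      have h2 : g (-(c • ξ)) = -c * g ξ := by
        rw [show -(c • ξ) = (-c) • ξ by simp]; exact gauge_smul_of_nonneg (by linarith) ξ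
      rw [h1, h2]; ring
  · intro ξ η
    rw [key', key', key']
    have h1 := gauge_add_le hs_conv hs_abs ξ η
    have h2 := gauge_add_le hs_conv hs_abs (-ξ) (-η)
    rw [← neg_add ξ η] at h2
    change g _ ≤ g _ + g _ at h1
    change g _ ≤ g _ + g _ at h2
    linarith
end
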